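/- The instance (A, k) of Distinct Vectors constructed from φ has a solution if and only if φ is satisfiable. -/

import Mathlib

/-!
The construction of the paper.  Rows and columns are 0-indexed here:
* `r ≥ 2` is a power of two, the number of variables of the CNF formula `φ`;
  variables are elements of `Fin r`; a literal is a variable plus a polarity.
* `s = 2 ^ ℓ - 1` (with `ℓ ≥ 1`) is the number of clauses; clause `q : Fin s`
  is the finite set `Clause q` of literals.
* `L = log₂ r` is the number of bundles; bundle `i` is a list `B i` of exactly
  `r' = ⌈r / log₂ r⌉` variables (with repetitions allowed), and every variable
  occurs in exactly one bundle.
* For every bundle `i` there is a list of `ρ = 2 ^ r'` truth assignments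
  `asg i p : Fin r → Bool` (`p : Fin ρ`, only the values on `B i`'s variables are
  relevant) containing every assignment of `B i`'s variables at least once.
* The matrix `A` has `n = ℓ + ρ * L` columns: the `ℓ` consistency columns
  `0, …, ℓ - 1`, followed, for each bundle `i`, by `B i`'s columns
  `ℓ + i * ρ, …, ℓ + (i + 1) * ρ - 1` (the `p`-th corresponding to assignment `p`).
* The matrix `A` has `m = 1 + L + 2 * s` rows: the all-zero row `0`, the bundle
  indicator rows `1, …, L` (row `i + 1` is `1` exactly on bundle `i`'s columns),
  and, for each clause `q : Fin s`, the odd row `1 + L + 2 * q` (the `ℓ`-bit binary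
  encoding of `q + 1` on the consistency columns and `sat_i(p, q)` on the `p`-th of
  bundle `i`'s columns) and the even row `1 + L + 2 * q + 1` (the encoding of `q + 1`
  on the consistency columns and `0` elsewhere).
* `k = ℓ + L`.  A solution is a set `K` of at most `k` columns such that the rows
  of `A` restricted to the columns in `K` are pairwise distinct.
-/

/-- A literal over variables `Fin r`: a variable together with a polarity. -/
structure DVLit (r : ℕ) where
  var : Fin r
  pos : Bool
deriving DecidableEq

/-- All the data of the construction: the CNF formula `φ` (variables, clauses),
the bundles, and the lists of truth assignments of each bundle. -/
structure DVInstance where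
  /-- number of variables -/
  r : ℕ
  hr : 2 ≤ r
  hrpow : ∃ t : ℕ, r = 2 ^ t
  ℓ : ℕ
  hℓ : 1 ≤ ℓ
  /-- number of clauses -/
  s : ℕ
  hs : s = 2 ^ ℓ - 1
  /-- the clauses of `φ` -/
  Clause : Fin s → Finset (DVLit r)
  /-- the bundles: lists of variables of length `r' = ⌈r / log₂ r⌉` -/
  B : Fin (Nat.log 2 r) → List (Fin r)
  hBlen : ∀ i, (B i).length = (r + Nat.log 2 r - 1) / Nat.log 2 r
  /-- every variable occurs in exactly one bundle -/
  hBpart : ∀ v : Fin r, ∃! i, v ∈ B i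
  /-- the list of `ρ = 2 ^ r'` truth assignments of each bundle -/
  asg : Fin (Nat.log 2 r) → Fin (2 ^ ((r + Nat.log 2 r - 1) / Nat.log 2 r)) →
    Fin r → Bool
  /-- every assignment of a bundle's variables occurs at least once in its list -/
  hasg : ∀ i, ∀ β : Fin r → Bool, ∃ p, ∀ v ∈ B i, asg i p v = β v

namespace DVInstance

variable (D : DVInstance)

/-- `L = log₂ r`, the number of bundles. -/
def L : ℕ := Nat.log 2 D.r

/-- `r' = ⌈r / log₂ r⌉`, the size of each bundle. -/
def r' : ℕ := (D.r + D.L - 1) / D.L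

/-- `ρ = 2 ^ r'`, the number of columns of each bundle. -/
def ρ : ℕ := 2 ^ D.r'

/-- the number `n = log₂(s + 1) + ρ * log₂ r` of columns of `A`. -/
def n : ℕ := D.ℓ + D.ρ * D.L

/-- the number `m = 1 + log₂ r + 2 * s` of rows of `A`. -/
def m : ℕ := 1 + D.L + 2 * D.s

/-- the budget `k = log₂(s + 1) + log₂ r`. -/
def k : ℕ := D.ℓ + D.L

/-- `sat_i(p, q)`: whether the `p`-th assignment of bundle `i` makes clause `q` true,
i.e. whether some literal of clause `q` whose variable belongs to bundle `i` is set
to its polarity by the `p`-th assignment of bundle `i` (nat-indexed version;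
`false` outside the index ranges). -/
def satN (i p q : ℕ) : Bool :=
  if h : i < D.L ∧ p < D.ρ ∧ q < D.s then
    decide (∃ lit ∈ D.Clause ⟨q, h.2.2⟩, lit.var ∈ D.B ⟨i, h.1⟩ ∧
      D.asg ⟨i, h.1⟩ ⟨p, h.2.1⟩ lit.var = lit.pos)
  else false

/-- The constructed binary matrix `A` (rows and columns 0-indexed;
entries outside the `m × n` range are irrelevant). -/
def A (row col : ℕ) : Bool :=
  if row = 0 then
    -- the all-zero row
    false
  else if row ≤ D.L then
    -- bundle indicator rows: row `i + 1` is `1` exactly on bundle `i`'s columns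
    decide (D.ℓ + (row - 1) * D.ρ ≤ col ∧ col < D.ℓ + row * D.ρ)
  else if col < D.ℓ then
    -- clause rows on the consistency columns: the binary encoding of the
    -- (1-indexed) clause number
    Nat.testBit ((row - D.L - 1) / 2 + 1) col
  else if (row - D.L - 1) % 2 = 0 then
    -- odd row of clause `q = (row - L - 1) / 2`: `sat_i(p, q)` on the `p`-th of
    -- bundle `i`'s columns
    D.satN ((col - D.ℓ) / D.ρ) ((col - D.ℓ) % D.ρ) ((row - D.L - 1) / 2)
  else
    -- even row of clause `q`: zero outside the consistency columns
    false

/-- `K` is a solution for the instance `(A, k)`: a set of at most `k` columns of `A`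
such that the rows of `A` restricted to the columns in `K` are pairwise distinct. -/
def Solution (K : Finset ℕ) : Prop :=
  (∀ c ∈ K, c < D.n) ∧ K.card ≤ D.k ∧
    ∀ i j, i < D.m → j < D.m → i ≠ j → ∃ c ∈ K, D.A i c ≠ D.A j c

end DVInstance

namespace DVInstance

variable (D : DVInstance)

lemma hL1 : 1 ≤ D.L := by
  have : (2:ℕ) ^ 1 ≤ D.r := by simpa using D.hr
  exact (Nat.le_log_iff_pow_le (by norm_num) (by have := D.hr; omega)).mpr this

lemma hρ0 : 0 < D.ρ := by unfold ρ; positivity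

lemma hs2 : D.s + 1 = 2 ^ D.ℓ := by
  have h1 : 1 ≤ 2 ^ D.ℓ := Nat.one_le_two_pow
  have := D.hs; omega

lemma A_zero (c : ℕ) : D.A 0 c = false := by simp [A]

lemma A_bundle (i c : ℕ) (hi : i < D.L) :
    D.A (i + 1) c = decide (D.ℓ + i * D.ρ ≤ c ∧ c < D.ℓ + (i + 1) * D.ρ) := by
  unfold A
  rw [if_neg (by omega), if_pos (by omega)]
  simp

lemma A_clause_lt (q e c : ℕ) (he : e ≤ 1) (hc : c < D.ℓ) :
    D.A (1 + D.L + (2 * q + e)) c = Nat.testBit (q + 1) c := by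
  unfold A
  rw [if_neg (by omega), if_neg (by omega), if_pos hc]
  congr 2
  omega

lemma A_odd_ge (q c : ℕ) (hc : D.ℓ ≤ c) :
    D.A (1 + D.L + (2 * q + 0)) c
      = D.satN ((c - D.ℓ) / D.ρ) ((c - D.ℓ) % D.ρ) q := by
  unfold A
  rw [if_neg (by omega), if_neg (by omega), if_neg (by omega), if_pos (by omega)]
  congr 1
  omega

lemma A_even_ge (q c : ℕ) (hc : D.ℓ ≤ c) :
    D.A (1 + D.L + (2 * q + 1)) c = false := by
  unfold A
  rw [if_neg (by omega), if_neg (by omega), if_neg (by omega), if_neg (by omega)]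

lemma satN_eq_true {i p q : ℕ} (hi : i < D.L) (hp : p < D.ρ) (hq : q < D.s) :
    D.satN i p q = true ↔
      ∃ lit ∈ D.Clause ⟨q, hq⟩, lit.var ∈ D.B ⟨i, hi⟩ ∧
        D.asg ⟨i, hi⟩ ⟨p, hp⟩ lit.var = lit.pos := by
  unfold satN
  rw [dif_pos (show i < D.L ∧ p < D.ρ ∧ q < D.s from ⟨hi, hp, hq⟩)]
  exact decide_eq_true_iff

lemma mem_div {c i : ℕ} (h1 : D.ℓ + i * D.ρ ≤ c) (h2 : c < D.ℓ + (i + 1) * D.ρ) :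
    (c - D.ℓ) / D.ρ = i := by
  rw [Nat.add_mul, one_mul] at h2
  exact Nat.div_eq_of_lt_le (by omega) (by rw [Nat.add_mul, one_mul]; omega)

lemma mem_mod {c i : ℕ} (h1 : D.ℓ + i * D.ρ ≤ c) (h2 : c < D.ℓ + (i + 1) * D.ρ) :
    (c - D.ℓ) % D.ρ = c - D.ℓ - i * D.ρ := by
  have hd := D.mem_div h1 h2
  have h4 := Nat.mod_add_div (c - D.ℓ) D.ρ
  rw [hd, Nat.mul_comm] at h4
  rw [Nat.add_mul, one_mul] at h2
  omega

lemma exists_testBit_ne {a b : ℕ} (ha : a < 2 ^ D.ℓ) (hb : b < 2 ^ D.ℓ) (hab : a ≠ b) :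
    ∃ j, j < D.ℓ ∧ Nat.testBit a j ≠ Nat.testBit b j := by
  by_contra h
  push_neg at h
  refine hab (Nat.eq_of_testBit_eq fun j => ?_)
  by_cases hj : j < D.ℓ
  · exact h j hj
  · have h2 : (2:ℕ) ^ D.ℓ ≤ 2 ^ j := Nat.pow_le_pow_right (by norm_num) (by omega)
    rw [Nat.testBit_lt_two_pow (lt_of_lt_of_le ha h2),
        Nat.testBit_lt_two_pow (lt_of_lt_of_le hb h2)]

lemma row_cases {row : ℕ} (h : row < D.m) :
    row = 0 ∨ (∃ i < D.L, row = i + 1) ∨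
      (∃ q < D.s, ∃ e ≤ 1, row = 1 + D.L + (2 * q + e)) := by
  unfold m at h
  by_cases h0 : row = 0
  · exact Or.inl h0
  by_cases h1 : row ≤ D.L
  · exact Or.inr (Or.inl ⟨row - 1, by omega, by omega⟩)
  · exact Or.inr (Or.inr ⟨(row - D.L - 1) / 2, by omega, (row - D.L - 1) % 2, by omega, by omega⟩)

end DVInstance



/-- The constructed instance `(A, k)` has a solution if and only if
`φ` is satisfiable. -/
theorem solution_iff_satisfiable (D : DVInstance) :
    (∃ K : Finset ℕ, D.Solution K) ↔
      ∃ α : Fin D.r → Bool, ∀ q : Fin D.s, ∃ lit ∈ D.Clause q, α lit.var = lit.pos := by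
  constructor
  · rintro ⟨K, hKn, hKcard, hdist⟩
    -- every consistency column is in K
    have hcons : ∀ j, j < D.ℓ → j ∈ K := by
      intro j hj
      have h3 : 1 ≤ 2 ^ j := Nat.one_le_two_pow
      have hq : 2 ^ j - 1 < D.s := by
        have h1 : 2 ^ j < 2 ^ D.ℓ := Nat.pow_lt_pow_right (by norm_num) hj
        have h2 := D.hs2
        omega
      obtain ⟨c, hcK, hc⟩ := hdist 0 (1 + D.L + (2 * (2 ^ j - 1) + 1))
        (by unfold DVInstance.m; omega) (by unfold DVInstance.m; omega) (by omega)
      rw [D.A_zero] at hc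
      by_cases hcl : c < D.ℓ
      · rw [D.A_clause_lt _ 1 c le_rfl hcl] at hc
        have h4 : (2 ^ j - 1 + 1) = 2 ^ j := by omega
        rw [h4, Nat.testBit_two_pow] at hc
        have h5 : j = c := by
          by_contra hne
          simp [hne] at hc
        rwa [← h5] at hcK
      · rw [D.A_even_ge _ c (by omega)] at hc
        exact absurd rfl hc
    -- at least one column per bundle
    have hbund : ∀ i : Fin D.L, ∃ c, c ∈ K ∧
        D.ℓ + (i : ℕ) * D.ρ ≤ c ∧ c < D.ℓ + ((i : ℕ) + 1) * D.ρ := by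
      intro i
      obtain ⟨c, hcK, hc⟩ := hdist 0 ((i : ℕ) + 1) (by unfold DVInstance.m; omega)
        (by have := i.isLt; unfold DVInstance.m; omega) (by omega)
      rw [D.A_zero, D.A_bundle _ _ i.isLt] at hc
      refine ⟨c, hcK, ?_⟩
      by_contra h
      rw [decide_eq_false h] at hc
      exact hc rfl
    choose g hg1 hg2 hg3 using hbund
    have hginj : Function.Injective g := by
      intro a b hab
      have ha := D.mem_div (hg2 a) (hg3 a)
      have hb := D.mem_div (hg2 b) (hg3 b)
      rw [hab] at ha
      exact Fin.ext (ha.symm.trans hb)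
    have hgl : ∀ i, D.ℓ ≤ g i := fun i => by have := hg2 i; omega
    have hKeq : K = Finset.range D.ℓ ∪ Finset.image g Finset.univ := by
      refine (Finset.eq_of_subset_of_card_le ?_ ?_).symm
      · intro c hc
        rcases Finset.mem_union.mp hc with h | h
        · exact hcons c (Finset.mem_range.mp h)
        · obtain ⟨i, -, rfl⟩ := Finset.mem_image.mp h
          exact hg1 i
      · have hdisj : Disjoint (Finset.range D.ℓ) (Finset.image g Finset.univ) := by
          rw [Finset.disjoint_left]
          intro c hc1 hc2
          obtain ⟨i, -, rfl⟩ := Finset.mem_image.mp hc2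
          exact absurd (Finset.mem_range.mp hc1) (by have := hgl i; omega)
        rw [Finset.card_union_of_disjoint hdisj, Finset.card_range,
          Finset.card_image_of_injective _ hginj, Finset.card_univ, Fintype.card_fin]
        exact hKcard
    -- the satisfying assignment
    have hBp : ∀ v : Fin D.r, ∃ i, v ∈ D.B i ∧ ∀ j, v ∈ D.B j → j = i :=
      fun v => D.hBpart v
    choose bv hbv1 hbv2 using hBp
    have hpv : ∀ i : Fin D.L, g i - D.ℓ - (i : ℕ) * D.ρ < D.ρ := by
      intro i
      have h := hg3 i
      have h2 := hg2 i
      have h3 := D.hρ0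
      rw [Nat.add_mul, one_mul] at h
      omega
    refine ⟨fun v => D.asg (bv v) ⟨g (bv v) - D.ℓ - (bv v : ℕ) * D.ρ, hpv (bv v)⟩ v, ?_⟩
    intro q
    obtain ⟨c, hcK, hc⟩ := hdist (1 + D.L + (2 * (q : ℕ) + 0)) (1 + D.L + (2 * (q : ℕ) + 1))
      (by have := q.isLt; unfold DVInstance.m; omega)
      (by have := q.isLt; unfold DVInstance.m; omega) (by omega)
    have hcℓ : D.ℓ ≤ c := by
      by_contra h
      push_neg at h
      rw [D.A_clause_lt _ 0 c (by omega) h, D.A_clause_lt _ 1 c le_rfl h] at hc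
      exact hc rfl
    rw [D.A_odd_ge _ c hcℓ, D.A_even_ge _ c hcℓ, Bool.ne_false_iff] at hc
    have hcmem : c ∈ Finset.range D.ℓ ∪ Finset.image g Finset.univ := hKeq ▸ hcK
    rcases Finset.mem_union.mp hcmem with h | h
    · exact absurd (Finset.mem_range.mp h) (by omega)
    obtain ⟨i, -, rfl⟩ := Finset.mem_image.mp h
    rw [D.mem_div (hg2 i) (hg3 i), D.mem_mod (hg2 i) (hg3 i),
      D.satN_eq_true i.isLt (hpv i) q.isLt] at hc
    obtain ⟨lit, hlit, hvar, hpos⟩ := hc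
    refine ⟨lit, hlit, ?_⟩
    have he : i = bv lit.var := hbv2 lit.var i hvar
    have hgoal : D.asg (bv lit.var)
        ⟨g (bv lit.var) - D.ℓ - ((bv lit.var : Fin D.L) : ℕ) * D.ρ, hpv (bv lit.var)⟩
        lit.var = lit.pos := by
      rw [← he]; exact hpos
    exact hgoal
  · rintro ⟨α, hα⟩
    choose p hp using fun i => D.hasg i α
    have hplt : ∀ i : Fin D.L, (p i : ℕ) < D.ρ := fun i => (p i).isLt
    set f : Fin D.L → ℕ := fun i => D.ℓ + (i : ℕ) * D.ρ + (p i : ℕ) with hf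
    have hfrange : ∀ i : Fin D.L,
        D.ℓ + (i : ℕ) * D.ρ ≤ f i ∧ f i < D.ℓ + ((i : ℕ) + 1) * D.ρ := by
      intro i
      have := hplt i
      constructor
      · simp only [hf]; omega
      · rw [Nat.add_mul, one_mul]; simp only [hf]; omega
    have hfge : ∀ i : Fin D.L, D.ℓ ≤ f i := fun i => le_trans (by omega) (hfrange i).1
    refine ⟨Finset.range D.ℓ ∪ Finset.image f Finset.univ, ?_, ?_, ?_⟩
    · intro c hc
      rcases Finset.mem_union.mp hc with h | h
      · have := Finset.mem_range.mp h
        unfold DVInstance.n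
        omega
      · obtain ⟨i, -, rfl⟩ := Finset.mem_image.mp h
        have h1 := (hfrange i).2
        have h2 : ((i : ℕ) + 1) * D.ρ ≤ D.L * D.ρ := Nat.mul_le_mul_right _ i.isLt
        have h3 : D.ρ * D.L = D.L * D.ρ := Nat.mul_comm _ _
        unfold DVInstance.n
        omega
    · calc (Finset.range D.ℓ ∪ Finset.image f Finset.univ).card
          ≤ (Finset.range D.ℓ).card + (Finset.image f Finset.univ).card :=
            Finset.card_union_le _ _
        _ ≤ D.ℓ + D.L := by
            rw [Finset.card_range]
            have h1 := Finset.card_image_le (f := f) (s := (Finset.univ : Finset (Fin D.L)))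
            rw [Finset.card_univ, Fintype.card_fin] at h1
            omega
        _ = D.k := rfl
    · -- distinctness
      set K := Finset.range D.ℓ ∪ Finset.image f Finset.univ with hK
      have hmemr : ∀ j, j < D.ℓ → j ∈ K :=
        fun j hj => Finset.mem_union_left _ (Finset.mem_range.mpr hj)
      have hmemf : ∀ i : Fin D.L, f i ∈ K :=
        fun i => Finset.mem_union_right _ (Finset.mem_image_of_mem f (Finset.mem_univ i))
      have sym : ∀ a b : ℕ, (∃ c ∈ K, D.A a c ≠ D.A b c) → ∃ c ∈ K, D.A b c ≠ D.A a c := by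
        rintro a b ⟨c, h1, h2⟩; exact ⟨c, h1, h2.symm⟩
      have hqlt : ∀ q, q < D.s → q + 1 < 2 ^ D.ℓ := by
        have := D.hs2; intro q hq; omega
      have hAci : ∀ i : Fin D.L, D.A ((i : ℕ) + 1) (f i) = true := by
        intro i
        rw [D.A_bundle _ _ i.isLt]
        exact decide_eq_true (hfrange i)
      have hAcj : ∀ (j : ℕ) (hj : j < D.L) (i : Fin D.L), j ≠ (i : ℕ) →
          D.A (j + 1) (f i) = false := by
        intro j hj i hne
        rw [D.A_bundle _ _ hj]
        refine decide_eq_false ?_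
        rintro ⟨h1, h2⟩
        exact hne ((D.mem_div h1 h2).symm.trans (D.mem_div (hfrange i).1 (hfrange i).2))
      have hAbc : ∀ (j c : ℕ), j < D.L → c < D.ℓ → D.A (j + 1) c = false := by
        intro j c hj hc
        rw [D.A_bundle _ _ hj]
        refine decide_eq_false ?_
        rintro ⟨h1, h2⟩
        omega
      have hsat : ∀ (q : ℕ) (hq : q < D.s),
          ∃ i : Fin D.L, D.A (1 + D.L + (2 * q + 0)) (f i) = true := by
        intro q hq
        obtain ⟨lit, hlit, hpos⟩ := hα ⟨q, hq⟩
        obtain ⟨i, hiB, -⟩ := D.hBpart lit.var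
        refine ⟨i, ?_⟩
        rw [D.A_odd_ge _ _ (hfge i), D.mem_div (hfrange i).1 (hfrange i).2,
          D.mem_mod (hfrange i).1 (hfrange i).2]
        have hmod : f i - D.ℓ - (i : ℕ) * D.ρ = (p i : ℕ) := by simp only [hf]; omega
        rw [hmod, D.satN_eq_true i.isLt (hplt i) hq]
        refine ⟨lit, hlit, hiB, ?_⟩
        have h1 : D.asg i (p i) lit.var = α lit.var := hp i lit.var hiB
        exact h1.trans hpos
      have c01 : ∀ i : Fin D.L, ∃ c ∈ K, D.A 0 c ≠ D.A ((i : ℕ) + 1) c := by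
        intro i
        exact ⟨f i, hmemf i, by rw [D.A_zero, hAci i]; simp⟩
      have c02 : ∀ q e, q < D.s → e ≤ 1 →
          ∃ c ∈ K, D.A 0 c ≠ D.A (1 + D.L + (2 * q + e)) c := by
        intro q e hq he
        obtain ⟨j, hj, hne⟩ := D.exists_testBit_ne (a := 0) (b := q + 1)
          (by positivity) (hqlt q hq) (by omega)
        refine ⟨j, hmemr j hj, ?_⟩
        rw [D.A_zero, D.A_clause_lt _ e j he hj]
        simpa using hne
      have c12 : ∀ (i : Fin D.L) q e, q < D.s → e ≤ 1 →
          ∃ c ∈ K, D.A ((i : ℕ) + 1) c ≠ D.A (1 + D.L + (2 * q + e)) c := by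
        intro i q e hq he
        obtain ⟨j, hj, hne⟩ := D.exists_testBit_ne (a := 0) (b := q + 1)
          (by positivity) (hqlt q hq) (by omega)
        refine ⟨j, hmemr j hj, ?_⟩
        rw [hAbc (i : ℕ) j i.isLt hj, D.A_clause_lt _ e j he hj]
        simpa using hne
      have c11 : ∀ i j : Fin D.L, (i : ℕ) ≠ (j : ℕ) →
          ∃ c ∈ K, D.A ((i : ℕ) + 1) c ≠ D.A ((j : ℕ) + 1) c := by
        intro i j hne
        refine ⟨f i, hmemf i, ?_⟩
        rw [hAci i, hAcj (j : ℕ) j.isLt i (fun h => hne h.symm)]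
        simp
      have c22 : ∀ q1 e1 q2 e2, q1 < D.s → e1 ≤ 1 → q2 < D.s → e2 ≤ 1 →
          2 * q1 + e1 ≠ 2 * q2 + e2 →
          ∃ c ∈ K, D.A (1 + D.L + (2 * q1 + e1)) c ≠ D.A (1 + D.L + (2 * q2 + e2)) c := by
        intro q1 e1 q2 e2 hq1 he1 hq2 he2 hne
        by_cases hqq : q1 = q2
        · subst hqq
          have key : ∃ c ∈ K, D.A (1 + D.L + (2 * q1 + 0)) c ≠ D.A (1 + D.L + (2 * q1 + 1)) c := by
            obtain ⟨i, hi⟩ := hsat q1 hq1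
            refine ⟨f i, hmemf i, ?_⟩
            rw [D.A_even_ge _ _ (hfge i), hi]
            simp
          interval_cases e1 <;> interval_cases e2 <;>
            first | omega | exact key | exact sym _ _ key
        · obtain ⟨j, hj, hne'⟩ := D.exists_testBit_ne (a := q1 + 1) (b := q2 + 1)
            (hqlt q1 hq1) (hqlt q2 hq2) (by omega)
          refine ⟨j, hmemr j hj, ?_⟩
          rw [D.A_clause_lt _ e1 j he1 hj, D.A_clause_lt _ e2 j he2 hj]
          exact hne'
      intro x y hx hy hxy
      rcases D.row_cases hx with rfl | ⟨i, hi, rfl⟩ | ⟨q1, hq1, e1, he1, rfl⟩ <;>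
        rcases D.row_cases hy with rfl | ⟨j, hj, rfl⟩ | ⟨q2, hq2, e2, he2, rfl⟩
      · exact absurd rfl hxy
      · exact c01 ⟨j, hj⟩
      · exact c02 q2 e2 hq2 he2
      · exact sym _ _ (c01 ⟨i, hi⟩)
      · exact c11 ⟨i, hi⟩ ⟨j, hj⟩ (show i ≠ j by omega)
      · exact c12 ⟨i, hi⟩ q2 e2 hq2 he2
      · exact sym _ _ (c02 q1 e1 hq1 he1)
      · exact sym _ _ (c12 ⟨j, hj⟩ q1 e1 hq1 he1)
      · exact c22 q1 e1 q2 e2 hq1 he1 hq2 he2 (by omega)
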